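/- Let G be a cubic graph, let u1,...,u5 be the vertices of a circuit of G in order, and assume G is either cyclically 5-connected, or quad-connected with a quadrangle C such that u3,u4 ∈ V(C) and u1,u2,u5 ∉ V(C). Let v1 be the neighbor of u1 other than u2 and u5. Then G+(u3,u4,u1,v1) is a long 1-extension of G. -/
import Mathlib


open SimpleGraph

/-- A graph has a circuit if it contains a cycle. -/
def HasCircuit {V : Type} (G : SimpleGraph V) : Prop :=
  ∃ (v : V) (w : G.Walk v v), w.IsCycle

/-- `s` is the vertex set of a quadrangle (circuit of length four) of `G`. -/
def IsQuadSet {V : Type} (G : SimpleGraph V) (s : Set V) : Prop :=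
  ∃ a b c d : V, s = {a, b, c, d} ∧ a ≠ b ∧ a ≠ c ∧ a ≠ d ∧ b ≠ c ∧ b ≠ d ∧ c ≠ d ∧
    G.Adj a b ∧ G.Adj b c ∧ G.Adj c d ∧ G.Adj d a

def HasQuadrangle {V : Type} (G : SimpleGraph V) : Prop := ∃ s, IsQuadSet G s

def AtMostOneQuadrangle {V : Type} (G : SimpleGraph V) : Prop :=
  ∀ s t, IsQuadSet G s → IsQuadSet G t → s = t

/-- The edge cut `δA`: edges with one end in `A` and the other outside. -/
def cutEdges {V : Type} (G : SimpleGraph V) (A : Set V) : Set (Sym2 V) :=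
  {e | ∃ a b, a ∈ A ∧ b ∉ A ∧ G.Adj a b ∧ e = s(a, b)}

/-- `G` is `k`-connected: more than `k` vertices and removing fewer than `k`
vertices leaves a connected graph. -/
def IsKConnected {V : Type} [Fintype V] (G : SimpleGraph V) (k : ℕ) : Prop :=
  k < Fintype.card V ∧ ∀ S : Set V, S.ncard < k → (G.induce Sᶜ).Connected

/-- Every vertex has degree three. -/
def IsCubic {V : Type} (G : SimpleGraph V) : Prop :=
  ∀ v : V, (G.neighborSet v).ncard = 3

/-- Cyclically `k`-connected cubic graph: 3-connected, at least `2k` vertices, and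
every edge-cut of cardinality less than `k` has a circuit-free side. -/
def CyclicallyKConnected {V : Type} [Fintype V] (G : SimpleGraph V) (k : ℕ) : Prop :=
  IsKConnected G 3 ∧ 2 * k ≤ Fintype.card V ∧
    ∀ A : Set V, A.Nonempty → Aᶜ.Nonempty → (cutEdges G A).ncard < k →
      ¬ HasCircuit (G.induce A) ∨ ¬ HasCircuit (G.induce Aᶜ)

/-- The induced subgraph on `A` is (exactly) a quadrangle. -/
def IsQuadrangleGraphOn {V : Type} (G : SimpleGraph V) (A : Set V) : Prop :=
  ∃ a b c d : V, A = {a, b, c, d} ∧ a ≠ b ∧ a ≠ c ∧ a ≠ d ∧ b ≠ c ∧ b ≠ d ∧ c ≠ d ∧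
    G.Adj a b ∧ G.Adj b c ∧ G.Adj c d ∧ G.Adj d a ∧ ¬ G.Adj a c ∧ ¬ G.Adj b d

/-- Quad-connected cubic graph. -/
def QuadConnected {V : Type} [Fintype V] (G : SimpleGraph V) : Prop :=
  CyclicallyKConnected G 4 ∧ 10 ≤ Fintype.card V ∧
    ((∃ s t, IsQuadSet G s ∧ IsQuadSet G t ∧ s ≠ t) → 12 ≤ Fintype.card V) ∧
    ∀ A : Set V, A.Nonempty → Aᶜ.Nonempty → (cutEdges G A).ncard ≤ 4 →
      (¬ HasCircuit (G.induce A) ∨ IsQuadrangleGraphOn G A) ∨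
      (¬ HasCircuit (G.induce Aᶜ) ∨ IsQuadrangleGraphOn G Aᶜ)

/-- `G+(u,v,x,y)`: subdivide the edges `uv` and `xy` (new vertices `Sum.inr 0`
resp. `Sum.inr 1`) and join the two new vertices by an edge. -/
def onePlus {V : Type} (G : SimpleGraph V) (u v x y : V) : SimpleGraph (V ⊕ Fin 2) :=
  SimpleGraph.fromRel (fun a b =>
    match a, b with
    | Sum.inl a, Sum.inl b => G.Adj a b ∧ s(a, b) ≠ s(u, v) ∧ s(a, b) ≠ s(x, y)
    | Sum.inl a, Sum.inr i => (i = 0 ∧ (a = u ∨ a = v)) ∨ (i = 1 ∧ (a = x ∨ a = y))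
    | Sum.inr _, Sum.inl _ => False
    | Sum.inr i, Sum.inr j => i ≠ j)

/-- The data of a 1-extension `G+(u,v,x,y)`: `uv`, `xy` are edges and
`u,v,x,y` are pairwise distinct. -/
def OneExtData {V : Type} (G : SimpleGraph V) (u v x y : V) : Prop :=
  G.Adj u v ∧ G.Adj x y ∧ u ≠ x ∧ u ≠ y ∧ v ≠ x ∧ v ≠ y

/-- A long 1-extension: moreover neither `u` nor `v` is adjacent to `x` or `y`. -/
def LongOneExtData {V : Type} (G : SimpleGraph V) (u v x y : V) : Prop :=
  OneExtData G u v x y ∧ ¬ G.Adj u x ∧ ¬ G.Adj u y ∧ ¬ G.Adj v x ∧ ¬ G.Adj v y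

/-- A short 1-extension: a 1-extension that is not long. -/
def ShortOneExtData {V : Type} (G : SimpleGraph V) (u v x y : V) : Prop :=
  OneExtData G u v x y ∧ (G.Adj u x ∨ G.Adj u y ∨ G.Adj v x ∨ G.Adj v y)

/-- A homeomorphic embedding of `G` into `H`. -/
structure HomeoEmb {V W : Type} (G : SimpleGraph V) (H : SimpleGraph W) where
  vmap : V → W
  vinj : Function.Injective vmap
  emap : ∀ ⦃a b : V⦄, G.Adj a b → H.Walk (vmap a) (vmap b)
  emap_path : ∀ ⦃a b : V⦄ (h : G.Adj a b), (emap h).IsPath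
  emap_symm : ∀ ⦃a b : V⦄ (h : G.Adj a b), (emap h.symm).reverse = emap h
  internal : ∀ ⦃a b : V⦄ (h : G.Adj a b) (w : W), w ∈ (emap h).support →
      w ∈ Set.range vmap → w = vmap a ∨ w = vmap b
  edge_disjoint : ∀ ⦃a b c d : V⦄ (h₁ : G.Adj a b) (h₂ : G.Adj c d),
      s(a, b) ≠ s(c, d) → ∀ e, e ∈ (emap h₁).edges → e ∉ (emap h₂).edges
  meet_ends : ∀ ⦃a b c d : V⦄ (h₁ : G.Adj a b) (h₂ : G.Adj c d),
      s(a, b) ≠ s(c, d) → ∀ w, w ∈ (emap h₁).support → w ∈ (emap h₂).support →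
      (w = vmap a ∨ w = vmap b) ∧ (w = vmap c ∨ w = vmap d)

/-- Subdividing the edge `uv` of `G`: the new vertex is `Sum.inr ()`. -/
def subdivideEdge {V : Type} (G : SimpleGraph V) (u v : V) : SimpleGraph (V ⊕ Unit) :=
  SimpleGraph.fromRel (fun a b =>
    match a, b with
    | Sum.inl a, Sum.inl b => G.Adj a b ∧ s(a, b) ≠ s(u, v)
    | Sum.inl a, Sum.inr _ => a = u ∨ a = v
    | _, _ => False)

/-- `S` is obtained from `G` by repeatedly subdividing edges. -/
inductive IsSubdivision {V : Type} (G : SimpleGraph V) : {W : Type} → SimpleGraph W → Prop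
  | refl : IsSubdivision G G
  | step {W : Type} {S : SimpleGraph W} {u v : W} (h : S.Adj u v)
      (hS : IsSubdivision G S) : IsSubdivision G (subdivideEdge S u v)

/-- `H` topologically contains `G`: some graph obtained from `G` by repeatedly
subdividing edges is isomorphic to a subgraph of `H`. -/
def TopContains {W V : Type} (H : SimpleGraph W) (G : SimpleGraph V) : Prop :=
  ∃ (U : Type) (S : SimpleGraph U), IsSubdivision G S ∧
    ∃ f : U → W, Function.Injective f ∧ ∀ a b : U, S.Adj a b → H.Adj (f a) (f b)

/-- The biladder on `2p` vertices; `(false, i)` is `uᵢ` and `(true, i)` is `vᵢ`. -/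
def biladder (p : ℕ) : SimpleGraph (Bool × ZMod p) :=
  SimpleGraph.fromRel (fun a b =>
    (a.1 = false ∧ b.1 = false ∧ b.2 = a.2 + 1) ∨
    (a.1 = true ∧ b.1 = true ∧ b.2 = a.2 + 2) ∨
    (a.1 = false ∧ b.1 = true ∧ a.2 = b.2))

private lemma start_unique {V : Type} {H : SimpleGraph V} {u v w₁ w₂ : V}
    (p : H.Walk u v) (hp : p.IsPath) (h1 : s(u, w₁) ∈ p.edges)
    (h2 : s(u, w₂) ∈ p.edges) : w₁ = w₂ := by
  cases p with
  | nil => simp at h1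
  | cons h' p' =>
    rename_i b
    rw [SimpleGraph.Walk.cons_isPath_iff] at hp
    rw [SimpleGraph.Walk.edges_cons, List.mem_cons] at h1 h2
    have key : ∀ w : V, s(u, w) = s(u, b) ∨ s(u, w) ∈ p'.edges → w = b := by
      intro w hw
      rcases hw with hw | hw
      · rw [Sym2.eq_iff] at hw
        rcases hw with ⟨_, rfl⟩ | ⟨hu, rfl⟩
        · rfl
        · exact absurd (hu ▸ hp.2) (by simp [SimpleGraph.Walk.start_mem_support])
      · exact absurd (SimpleGraph.Walk.fst_mem_support_of_mem_edges p' hw) hp.2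
    rw [key w₁ h1, key w₂ h2]

private lemma mindeg_two_circuit {W : Type} [Fintype W] (H : SimpleGraph W)
    (hne : Nonempty W)
    (h2 : ∀ v : W, ∃ w₁ w₂ : W, w₁ ≠ w₂ ∧ H.Adj v w₁ ∧ H.Adj v w₂) :
    HasCircuit H := by
  classical
  haveI : Nonempty W := hne
  obtain ⟨v0⟩ := hne
  set P : ℕ → Prop := fun n => ∃ (u v : W) (p : H.Walk u v), p.IsPath ∧ p.length = n with hP
  have hbound : ∀ n, P n → n < Fintype.card W := by
    rintro n ⟨u, v, p, hp, rfl⟩; exact hp.length_lt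
  have h0 : P 0 := ⟨v0, v0, SimpleGraph.Walk.nil, SimpleGraph.Walk.IsPath.nil, rfl⟩
  have hcpos : 0 < Fintype.card W := Fintype.card_pos
  set n := Nat.findGreatest P (Fintype.card W) with hn
  have hPn : P n := Nat.findGreatest_spec (Nat.zero_le _) h0
  have hmax : ∀ m, P m → m ≤ n := fun m hm =>
    Nat.le_findGreatest (le_of_lt (hbound m hm)) hm
  obtain ⟨u, v, p, hp, hlen⟩ := hPn
  obtain ⟨w₁, w₂, hw12, ha1, ha2⟩ := h2 u
  have hmem : ∀ w : W, H.Adj u w → w ∈ p.support := by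
    intro w hw
    by_contra hns
    have : P (n + 1) := ⟨w, v, SimpleGraph.Walk.cons hw.symm p,
      (SimpleGraph.Walk.cons_isPath_iff _ _).2 ⟨hp, hns⟩, by simp [hlen]⟩
    exact absurd (hmax _ this) (by omega)
  have hedge : ∃ w : W, H.Adj u w ∧ s(u, w) ∉ p.edges := by
    by_contra hcon
    push_neg at hcon
    exact hw12 (start_unique p hp (hcon w₁ ha1) (hcon w₂ ha2))
  obtain ⟨w, hw, hnedge⟩ := hedge
  have hws := hmem w hw
  have hq : (p.takeUntil w hws).IsPath := hp.takeUntil hws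
  refine ⟨w, SimpleGraph.Walk.cons hw.symm (p.takeUntil w hws), ?_⟩
  refine SimpleGraph.Path.cons_isCycle ⟨_, hq⟩ hw.symm ?_
  intro hmem'
  have := SimpleGraph.Walk.edges_takeUntil_subset p hws hmem'
  rw [Sym2.eq_swap] at this
  exact hnedge this

private lemma circuit_mono {V : Type} {G : SimpleGraph V} {A B : Set V}
    (hAB : A ⊆ B) (h : HasCircuit (G.induce A)) : HasCircuit (G.induce B) := by
  obtain ⟨v, c, hc⟩ := h
  exact ⟨_, c.map (G.induceHomOfLE hAB).toHom,
    hc.map (G.induceHomOfLE hAB).injective⟩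

private lemma cut_compl {V : Type} (G : SimpleGraph V) (A : Set V) :
    cutEdges G Aᶜ = cutEdges G A := by
  ext e
  constructor
  · rintro ⟨a, b, ha, hb, hadj, rfl⟩
    exact ⟨b, a, by simpa using hb, by simpa using ha, hadj.symm, Sym2.eq_swap⟩
  · rintro ⟨a, b, ha, hb, hadj, rfl⟩
    exact ⟨b, a, by simpa using hb, by simpa using ha, hadj.symm, Sym2.eq_swap⟩

private lemma cut_card {V : Type} [Fintype V] [DecidableEq V] (G : SimpleGraph V)
    [DecidableRel G.Adj] (A : Finset V) :
    (cutEdges G (↑A : Set V)).ncard = ∑ a ∈ A, (G.neighborFinset a \ A).card := by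
  classical
  have hset : cutEdges G (↑A : Set V) =
      ↑(A.biUnion fun a => (G.neighborFinset a \ A).image fun b => s(a, b)) := by
    ext e
    simp only [cutEdges, Set.mem_setOf_eq, Finset.coe_biUnion, Set.mem_iUnion,
      Finset.mem_coe, Finset.mem_image, Finset.mem_sdiff, mem_neighborFinset]
    constructor
    · rintro ⟨a, b, ha, hb, hadj, rfl⟩
      exact ⟨a, ha, b, ⟨hadj, by simpa using hb⟩, rfl⟩
    · rintro ⟨a, ha, b, ⟨hadj, hb⟩, rfl⟩
      exact ⟨a, b, ha, by simpa using hb, hadj, rfl⟩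
  rw [hset, Set.ncard_coe_finset]
  rw [Finset.card_biUnion]
  · refine Finset.sum_congr rfl fun a ha => ?_
    rw [Finset.card_image_of_injOn]
    intro b hb b' hb' he
    simp only [Finset.mem_coe, Finset.mem_sdiff, mem_neighborFinset] at hb hb'
    rw [Sym2.eq_iff] at he
    rcases he with ⟨-, h⟩ | ⟨h1, h2⟩
    · exact h
    · exact absurd (h1 ▸ ha) hb'.2
  · intro a ha a' ha' hne
    simp only [Finset.disjoint_left, Finset.mem_image, Finset.mem_sdiff,
      mem_neighborFinset]
    rintro e ⟨b, ⟨hb, hbA⟩, rfl⟩ ⟨b', ⟨hb', hbA'⟩, he⟩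
    rw [Sym2.eq_iff] at he
    rcases he with ⟨h1, -⟩ | ⟨h1, h2⟩
    · exact hne h1.symm
    · exact hbA (h1 ▸ ha')

private lemma nbhd_eq {V : Type} [Fintype V] [DecidableEq V] {G : SimpleGraph V}
    [DecidableRel G.Adj] (hcub : IsCubic G) {a b c d : V}
    (hab : G.Adj a b) (hac : G.Adj a c) (had : G.Adj a d)
    (hbc : b ≠ c) (hbd : b ≠ d) (hcd : c ≠ d) :
    G.neighborFinset a = {b, c, d} := by
  have hcard : (G.neighborFinset a).card = 3 := by
    have := hcub a
    rwa [Set.ncard_eq_toFinset_card'] at this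
  have hsub : ({b, c, d} : Finset V) ⊆ G.neighborFinset a := by
    intro w hw
    simp only [Finset.mem_insert, Finset.mem_singleton] at hw
    rcases hw with rfl | rfl | rfl <;> simp [mem_neighborFinset, hab, hac, had]
  have hc3 : ({b, c, d} : Finset V).card = 3 := by
    rw [Finset.card_insert_of_notMem (by simp [hbc, hbd]),
      Finset.card_insert_of_notMem (by simp [hcd]), Finset.card_singleton]
  exact (Finset.eq_of_subset_of_card_le hsub (by omega)).symm

private lemma three_nbrs {V : Type} [Fintype V] [DecidableEq V] {G : SimpleGraph V}
    [DecidableRel G.Adj] (hcub : IsCubic G) {a b c : V}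
    (hab : G.Adj a b) (hac : G.Adj a c) (hbc : b ≠ c) :
    ∃ d : V, d ≠ b ∧ d ≠ c ∧ G.Adj a d ∧ G.neighborFinset a = {b, c, d} := by
  have hcard : (G.neighborFinset a).card = 3 := by
    have := hcub a
    rwa [Set.ncard_eq_toFinset_card'] at this
  have hsub : ({b, c} : Finset V) ⊆ G.neighborFinset a := by
    intro w hw
    simp only [Finset.mem_insert, Finset.mem_singleton] at hw
    rcases hw with rfl | rfl <;> simp [mem_neighborFinset, hab, hac]
  have hss : ({b, c} : Finset V) ⊂ G.neighborFinset a := by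
    refine hsub.ssubset_of_ne ?_
    intro h
    have := congrArg Finset.card h
    rw [hcard, Finset.card_insert_of_notMem (by simp [hbc]),
      Finset.card_singleton] at this
    omega
  obtain ⟨d, hd, hdn⟩ := Finset.exists_of_ssubset hss
  simp only [Finset.mem_insert, Finset.mem_singleton, not_or] at hdn
  refine ⟨d, hdn.1, hdn.2, (mem_neighborFinset G a d).1 hd, ?_⟩
  exact nbhd_eq hcub hab hac ((mem_neighborFinset G a d).1 hd) hbc
    (Ne.symm hdn.1) (Ne.symm hdn.2)

private lemma adj_cases {V : Type} [Fintype V] [DecidableEq V] {G : SimpleGraph V}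
    [DecidableRel G.Adj] {a b c d : V} (hN : G.neighborFinset a = {b, c, d})
    {w : V} (hw : G.Adj a w) : w = b ∨ w = c ∨ w = d := by
  have : w ∈ G.neighborFinset a := (mem_neighborFinset G a w).2 hw
  rw [hN] at this
  simpa using this

private lemma outdeg_le_one {V : Type} [Fintype V] [DecidableEq V] {G : SimpleGraph V}
    [DecidableRel G.Adj] {a b c d : V} (hN : G.neighborFinset a = {b, c, d})
    {B : Finset V} (hb : b ∈ B) (hc : c ∈ B) :
    (G.neighborFinset a \ B).card ≤ 1 := by
  have hsub : G.neighborFinset a \ B ⊆ {d} := by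
    intro w hw
    rw [Finset.mem_sdiff, hN] at hw
    simp only [Finset.mem_insert, Finset.mem_singleton] at hw ⊢
    rcases hw.1 with rfl | rfl | rfl
    · exact absurd hb hw.2
    · exact absurd hc hw.2
    · rfl
  simpa using Finset.card_le_card hsub

private lemma outdeg_zero {V : Type} [Fintype V] [DecidableEq V] {G : SimpleGraph V}
    [DecidableRel G.Adj] {a b c d : V} (hN : G.neighborFinset a = {b, c, d})
    {B : Finset V} (hb : b ∈ B) (hc : c ∈ B) (hd : d ∈ B) :
    (G.neighborFinset a \ B).card = 0 := by
  rw [Finset.card_eq_zero, Finset.eq_empty_iff_forall_notMem]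
  intro w hw
  rw [Finset.mem_sdiff, hN] at hw
  simp only [Finset.mem_insert, Finset.mem_singleton] at hw
  rcases hw.1 with rfl | rfl | rfl
  · exact hw.2 hb
  · exact hw.2 hc
  · exact hw.2 hd

private lemma big_side {V : Type} [Fintype V] [DecidableEq V] (G : SimpleGraph V)
    [DecidableRel G.Adj] (hcub : IsCubic G) :
    ∀ (k : ℕ) (B : Finset V),
      (∑ b ∈ B, (G.neighborFinset b \ B).card) ≤ k → k + 1 ≤ B.card →
      HasCircuit (G.induce (↑B : Set V)) := by
  intro k
  induction k with
  | zero =>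
    intro B hsum hcard
    -- every vertex has all neighbors inside B
    have hall : ∀ b ∈ B, (G.neighborFinset b \ B).card = 0 := by
      intro b hb
      have := Finset.sum_le_sum_of_subset (Finset.singleton_subset_iff.2 hb)
        (f := fun b => (G.neighborFinset b \ B).card)
      simp only [Finset.sum_singleton] at this
      omega
    have hpos : 0 < B.card := by omega
    obtain ⟨b0, hb0⟩ := Finset.card_pos.1 hpos
    refine mindeg_two_circuit _ ⟨⟨b0, by simpa using hb0⟩⟩ ?_
    · rintro ⟨v, hv⟩
      have hvB : v ∈ B := by simpa using hv
      have hNcard : (G.neighborFinset v).card = 3 := by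
        have := hcub v; rwa [Set.ncard_eq_toFinset_card'] at this
      have hsub : G.neighborFinset v ⊆ B := by
        intro w hw
        by_contra hwB
        have : w ∈ G.neighborFinset v \ B := Finset.mem_sdiff.2 ⟨hw, hwB⟩
        have h0 := hall v hvB
        rw [Finset.card_eq_zero] at h0
        simp [h0] at this
      have hlt : 1 < (G.neighborFinset v).card := by omega
      obtain ⟨w₁, hw₁, w₂, hw₂, hne⟩ := Finset.one_lt_card.1 hlt
      refine ⟨⟨w₁, by simpa using hsub hw₁⟩, ⟨w₂, by simpa using hsub hw₂⟩,
        by simpa using hne, ?_, ?_⟩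
      · simpa using (mem_neighborFinset G v w₁).1 hw₁
      · simpa using (mem_neighborFinset G v w₂).1 hw₂
  | succ k ih =>
    intro B hsum hcard
    by_cases hmin : ∀ b ∈ B, 2 ≤ (G.neighborFinset b ∩ B).card
    · -- min degree 2 : directly find circuit
      have hpos : 0 < B.card := by omega
      obtain ⟨b0, hb0⟩ := Finset.card_pos.1 hpos
      refine mindeg_two_circuit _ ⟨⟨b0, by simpa using hb0⟩⟩ ?_
      · rintro ⟨v, hv⟩
        have hvB : v ∈ B := by simpa using hv
        obtain ⟨w₁, hw₁, w₂, hw₂, hne⟩ := Finset.one_lt_card.1 (hmin v hvB)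
        rw [Finset.mem_inter, mem_neighborFinset] at hw₁ hw₂
        exact ⟨⟨w₁, by simpa using hw₁.2⟩, ⟨w₂, by simpa using hw₂.2⟩,
          by simpa using hne, by simpa using hw₁.1, by simpa using hw₂.1⟩
    · push_neg at hmin
      obtain ⟨b, hbB, hdlt⟩ := hmin
      set d := (G.neighborFinset b ∩ B).card with hd
      have hd1 : d ≤ 1 := by omega
      have hNb : (G.neighborFinset b).card = 3 := by
        have := hcub b; rwa [Set.ncard_eq_toFinset_card'] at this
      have hout : (G.neighborFinset b \ B).card = 3 - d := by
        have := Finset.card_sdiff_add_card_inter (G.neighborFinset b) B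
        omega
      set B' := B.erase b with hB'
      -- relate the sums
      have hsum_split : ∑ c ∈ B, (G.neighborFinset c \ B).card =
          (∑ c ∈ B', (G.neighborFinset c \ B).card) + (3 - d) := by
        rw [hB', ← hout]
        rw [Finset.sum_erase_add B _ hbB]
      have hterm : ∀ c ∈ B', (G.neighborFinset c \ B').card ≤
          (G.neighborFinset c \ B).card + (if b ∈ G.neighborFinset c then 1 else 0) := by
        intro c hc
        have hsub : G.neighborFinset c \ B' ⊆
            (G.neighborFinset c \ B) ∪ (G.neighborFinset c ∩ {b}) := by
          intro w hw
          rw [Finset.mem_sdiff, hB', Finset.mem_erase, not_and_or, not_not] at hw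
          rcases hw.2 with h | h
          · exact Finset.mem_union_right _ (Finset.mem_inter.2 ⟨hw.1, by simp [h]⟩)
          · exact Finset.mem_union_left _ (Finset.mem_sdiff.2 ⟨hw.1, h⟩)
        refine le_trans (Finset.card_le_card hsub) ?_
        refine le_trans (Finset.card_union_le _ _) ?_
        gcongr
        split
        · next h =>
          have hle : (G.neighborFinset c ∩ {b}).card ≤ ({b} : Finset V).card :=
            Finset.card_le_card Finset.inter_subset_right
          simpa using hle
        · next h =>
          have : G.neighborFinset c ∩ {b} = ∅ := by
            rw [Finset.eq_empty_iff_forall_notMem]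
            intro w hw
            rw [Finset.mem_inter, Finset.mem_singleton] at hw
            exact h (hw.2 ▸ hw.1)
          simp [this]
      have hcount : (∑ c ∈ B', if b ∈ G.neighborFinset c then 1 else 0) = d := by
        have hfilter : B'.filter (fun c => b ∈ G.neighborFinset c) =
            G.neighborFinset b ∩ B := by
          ext c
          simp only [Finset.mem_filter, Finset.mem_inter, mem_neighborFinset, hB',
            Finset.mem_erase]
          constructor
          · rintro ⟨⟨hcb, hcB⟩, hadj⟩
            exact ⟨hadj.symm, hcB⟩
          · rintro ⟨hadj, hcB⟩
            exact ⟨⟨hadj.ne', hcB⟩, hadj.symm⟩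
        rw [← Finset.card_filter, hfilter, hd]
      have hS1 : ∑ c ∈ B', (G.neighborFinset c \ B').card ≤ k := by
        calc ∑ c ∈ B', (G.neighborFinset c \ B').card
            ≤ ∑ c ∈ B', ((G.neighborFinset c \ B).card +
              (if b ∈ G.neighborFinset c then 1 else 0)) :=
              Finset.sum_le_sum hterm
          _ = (∑ c ∈ B', (G.neighborFinset c \ B).card) + d := by
              rw [Finset.sum_add_distrib, hcount]
          _ ≤ k := by omega
      have hcard' : k + 1 ≤ B'.card := by
        rw [hB', Finset.card_erase_of_mem hbB]
        omega
      have := ih B' hS1 hcard'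
      refine circuit_mono ?_ this
      intro x hx
      have : x ∈ B' := by simpa using hx
      have : x ∈ B := Finset.erase_subset b B (hB' ▸ this)
      simpa using this

private lemma tri_circuit {V : Type} {G : SimpleGraph V} {A : Set V} {a b c : V}
    (ha : a ∈ A) (hb : b ∈ A) (hc : c ∈ A)
    (hab : a ≠ b) (hac : a ≠ c) (hbc : b ≠ c)
    (eab : G.Adj a b) (ebc : G.Adj b c) (eca : G.Adj c a) :
    HasCircuit (G.induce A) := by
  let x : ↥A := ⟨a, ha⟩
  let y : ↥A := ⟨b, hb⟩
  let z : ↥A := ⟨c, hc⟩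
  have nxy : x ≠ y := fun h => hab (congrArg Subtype.val h)
  have nxz : x ≠ z := fun h => hac (congrArg Subtype.val h)
  have nyz : y ≠ z := fun h => hbc (congrArg Subtype.val h)
  have hxy : (G.induce A).Adj x y := by simpa using eab
  have hyz : (G.induce A).Adj y z := by simpa using ebc
  have hzx : (G.induce A).Adj z x := by simpa using eca
  refine ⟨x, Walk.cons hxy (Walk.cons hyz (Walk.cons hzx Walk.nil)), ?_⟩
  rw [Walk.isCycle_def]
  refine ⟨?_, by simp, ?_⟩
  · rw [Walk.isTrail_def]
    simp [Sym2.eq_iff, nxy, nxz, nyz, nxy.symm, nxz.symm, nyz.symm]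
  · simp [nxy, nxz, nyz, nxy.symm, nxz.symm, nyz.symm]

private lemma quad_circuit {V : Type} {G : SimpleGraph V} {A : Set V} {a b c d : V}
    (ha : a ∈ A) (hb : b ∈ A) (hc : c ∈ A) (hd : d ∈ A)
    (hab : a ≠ b) (hac : a ≠ c) (had : a ≠ d) (hbc : b ≠ c) (hbd : b ≠ d)
    (hcd : c ≠ d)
    (eab : G.Adj a b) (ebc : G.Adj b c) (ecd : G.Adj c d) (eda : G.Adj d a) :
    HasCircuit (G.induce A) := by
  let x : ↥A := ⟨a, ha⟩
  let y : ↥A := ⟨b, hb⟩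
  let z : ↥A := ⟨c, hc⟩
  let w : ↥A := ⟨d, hd⟩
  have nxy : x ≠ y := fun h => hab (congrArg Subtype.val h)
  have nxz : x ≠ z := fun h => hac (congrArg Subtype.val h)
  have nxw : x ≠ w := fun h => had (congrArg Subtype.val h)
  have nyz : y ≠ z := fun h => hbc (congrArg Subtype.val h)
  have nyw : y ≠ w := fun h => hbd (congrArg Subtype.val h)
  have nzw : z ≠ w := fun h => hcd (congrArg Subtype.val h)
  have hxy : (G.induce A).Adj x y := by simpa using eab
  have hyz : (G.induce A).Adj y z := by simpa using ebc
  have hzw : (G.induce A).Adj z w := by simpa using ecd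
  have hwx : (G.induce A).Adj w x := by simpa using eda
  refine ⟨x, Walk.cons hxy (Walk.cons hyz (Walk.cons hzw (Walk.cons hwx Walk.nil))),
    ?_⟩
  rw [Walk.isCycle_def]
  refine ⟨?_, by simp, ?_⟩
  · rw [Walk.isTrail_def]
    simp [Sym2.eq_iff, nxy, nxz, nxw, nyz, nyw, nzw,
      nxy.symm, nxz.symm, nxw.symm, nyz.symm, nyw.symm, nzw.symm]
  · simp [nxy, nxz, nxw, nyz, nyw, nzw,
      nxy.symm, nxz.symm, nxw.symm, nyz.symm, nyw.symm, nzw.symm]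

private lemma ncard_four {V : Type} {a b c d : V}
    (hab : a ≠ b) (hac : a ≠ c) (had : a ≠ d) (hbc : b ≠ c) (hbd : b ≠ d)
    (hcd : c ≠ d) : ({a, b, c, d} : Set V).ncard = 4 := by
  classical
  have h : ({a, b, c, d} : Set V) = (↑({a, b, c, d} : Finset V) : Set V) := by simp
  rw [h, Set.ncard_coe_finset]
  rw [Finset.card_insert_of_notMem (by simp [hab, hac, had]),
    Finset.card_insert_of_notMem (by simp [hbc, hbd]),
    Finset.card_insert_of_notMem (by simp [hcd]), Finset.card_singleton]

private lemma quadOn_ncard {V : Type} {G : SimpleGraph V} {A : Set V}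
    (h : IsQuadrangleGraphOn G A) : A.ncard = 4 := by
  obtain ⟨a, b, c, d, rfl, h1, h2, h3, h4, h5, h6, -⟩ := h
  exact ncard_four h1 h2 h3 h4 h5 h6

private lemma cyc5_contra {V : Type} [Fintype V] [DecidableEq V] {G : SimpleGraph V}
    [DecidableRel G.Adj] (hcub : IsCubic G) (h5 : CyclicallyKConnected G 5)
    (A : Finset V) (hA : A.card ≤ 4) (hne : A.Nonempty)
    (hcut : ∑ a ∈ A, (G.neighborFinset a \ A).card ≤ 4)
    (hcirc : HasCircuit (G.induce (↑A : Set V))) : False := by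
  have hcard10 : 10 ≤ Fintype.card V := by
    have := h5.2.1; omega
  have hcutlt : (cutEdges G (↑A : Set V)).ncard < 5 := by
    rw [cut_card]; omega
  have hAcc : Aᶜ.card = Fintype.card V - A.card := Finset.card_compl A
  have hcne : ((↑A : Set V))ᶜ.Nonempty := by
    have : 0 < Aᶜ.card := by omega
    obtain ⟨v, hv⟩ := Finset.card_pos.1 this
    exact ⟨v, by simpa using (Finset.mem_compl.1 hv)⟩
  rcases h5.2.2 ↑A (by exact_mod_cast hne) hcne hcutlt with h | h
  · exact h hcirc
  · apply h
    have hcompl : ((↑A : Set V))ᶜ = (↑(Aᶜ) : Set V) := (Finset.coe_compl A).symm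
    rw [hcompl]
    apply big_side G hcub 4 Aᶜ
    · have : ∑ b ∈ Aᶜ, (G.neighborFinset b \ Aᶜ).card
          = (cutEdges G (↑(Aᶜ) : Set V)).ncard := (cut_card G Aᶜ).symm
      rw [this, ← hcompl, cut_compl, cut_card]
      omega
    · omega

private lemma quad_contra {V : Type} [Fintype V] [DecidableEq V] {G : SimpleGraph V}
    [DecidableRel G.Adj] (hcub : IsCubic G) (hq : QuadConnected G)
    (h12 : 12 ≤ Fintype.card V)
    (A : Finset V) (hA5 : 5 ≤ A.card) (hA : A.card ≤ 6)
    (hcut : ∑ a ∈ A, (G.neighborFinset a \ A).card ≤ 4)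
    (hcirc : HasCircuit (G.induce (↑A : Set V))) : False := by
  have hcutle : (cutEdges G (↑A : Set V)).ncard ≤ 4 := by
    rw [cut_card]; omega
  have hAcc : Aᶜ.card = Fintype.card V - A.card := Finset.card_compl A
  have hne : A.Nonempty := Finset.card_pos.1 (by omega)
  have hcne : ((↑A : Set V))ᶜ.Nonempty := by
    have : 0 < Aᶜ.card := by omega
    obtain ⟨v, hv⟩ := Finset.card_pos.1 this
    exact ⟨v, by simpa using (Finset.mem_compl.1 hv)⟩
  have hcompl : ((↑A : Set V))ᶜ = (↑(Aᶜ) : Set V) := (Finset.coe_compl A).symm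
  rcases hq.2.2.2 ↑A (by exact_mod_cast hne) hcne hcutle with (h | h) | (h | h)
  · exact h hcirc
  · have := quadOn_ncard h
    rw [Set.ncard_coe_finset] at this
    omega
  · apply h
    rw [hcompl]
    apply big_side G hcub 4 Aᶜ
    · have : ∑ b ∈ Aᶜ, (G.neighborFinset b \ Aᶜ).card
          = (cutEdges G (↑(Aᶜ) : Set V)).ncard := (cut_card G Aᶜ).symm
      rw [this, ← hcompl, cut_compl, cut_card]
      omega
    · omega
  · have := quadOn_ncard h
    rw [hcompl, Set.ncard_coe_finset] at this
    omega

private lemma quad_two_nbrs {V : Type} {G : SimpleGraph V} {C : Set V}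
    (h : IsQuadSet G C) {x : V} (hx : x ∈ C) :
    ∃ y z : V, y ∈ C ∧ z ∈ C ∧ y ≠ z ∧ G.Adj x y ∧ G.Adj x z := by
  obtain ⟨a, b, c, d, rfl, hab, hac, had, hbc, hbd, hcd, eab, ebc, ecd, eda⟩ := h
  simp only [Set.mem_insert_iff, Set.mem_singleton_iff] at hx
  rcases hx with rfl | rfl | rfl | rfl
  · exact ⟨b, d, by simp, by simp, hbd, eab, eda.symm⟩
  · exact ⟨a, c, by simp, by simp, hac, eab.symm, ebc⟩
  · exact ⟨b, d, by simp, by simp, hbd, ebc.symm, ecd⟩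
  · exact ⟨c, a, by simp, by simp, hac.symm, ecd.symm, eda⟩

private lemma quadset_outdeg {V : Type} [Fintype V] [DecidableEq V]
    {G : SimpleGraph V} [DecidableRel G.Adj] (hcub : IsCubic G) {C : Set V}
    (hCq : IsQuadSet G C) {B : Finset V} (hCB : ∀ w, w ∈ C → w ∈ B)
    {x : V} (hx : x ∈ C) : (G.neighborFinset x \ B).card ≤ 1 := by
  obtain ⟨y, z, hy, hz, hyz, exy, exz⟩ := quad_two_nbrs hCq hx
  obtain ⟨w, -, -, -, hN⟩ := three_nbrs hcub exy exz hyz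
  exact outdeg_le_one hN (hCB y hy) (hCB z hz)

private lemma third_in_quadset {V : Type} [Fintype V] [DecidableEq V]
    {G : SimpleGraph V} [DecidableRel G.Adj] {C : Set V}
    (hCq : IsQuadSet G C) {x p q r : V} (hx : x ∈ C)
    (hN : G.neighborFinset x = {p, q, r}) (hp : p ∉ C) : q ∈ C ∧ r ∈ C := by
  obtain ⟨y, z, hy, hz, hyz, exy, exz⟩ := quad_two_nbrs hCq hx
  have hyc := adj_cases hN exy
  have hzc := adj_cases hN exz
  rcases hyc with rfl | rfl | rfl
  · exact absurd hy hp
  · rcases hzc with rfl | rfl | rfl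
    · exact absurd hz hp
    · exact absurd rfl hyz
    · exact ⟨hy, hz⟩
  · rcases hzc with rfl | rfl | rfl
    · exact absurd hz hp
    · exact ⟨hz, hy⟩
    · exact absurd rfl hyz

private lemma card3_le {V : Type} [DecidableEq V] (a b c : V) :
    ({a, b, c} : Finset V).card ≤ 3 := by
  have h1 := Finset.card_insert_le a ({b, c} : Finset V)
  have h2 := Finset.card_insert_le b ({c} : Finset V)
  simp only [Finset.card_singleton] at h2
  omega

private lemma card4_le {V : Type} [DecidableEq V] (a b c d : V) :
    ({a, b, c, d} : Finset V).card ≤ 4 := by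
  have h1 := Finset.card_insert_le a ({b, c, d} : Finset V)
  have h2 := card3_le b c d
  omega

/-- for a circuit u1…u5 and v1 the third neighbor of u1,
the extension G+(u3,u4,u1,v1) is a long 1-extension. -/
theorem circuit_extension_long
    {V : Type} [Fintype V] (G : SimpleGraph V) (hcub : IsCubic G)
    (u₁ u₂ u₃ u₄ u₅ : V)
    (hcirc : ([u₁, u₂, u₃, u₄, u₅] : List V).Pairwise (· ≠ ·))
    (h12 : G.Adj u₁ u₂) (h23 : G.Adj u₂ u₃) (h34 : G.Adj u₃ u₄)
    (h45 : G.Adj u₄ u₅) (h51 : G.Adj u₅ u₁)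
    (hside : CyclicallyKConnected G 5 ∨
      (QuadConnected G ∧
        ∃ C : Set V, IsQuadSet G C ∧ u₃ ∈ C ∧ u₄ ∈ C ∧ u₁ ∉ C ∧ u₂ ∉ C ∧ u₅ ∉ C))
    (v₁ : V) (hv₁ : G.Adj u₁ v₁) (hv₁2 : v₁ ≠ u₂) (hv₁5 : v₁ ≠ u₅) :
    LongOneExtData G u₃ u₄ u₁ v₁ := by
  classical
  obtain ⟨a1, hrest⟩ := List.pairwise_cons.1 hcirc
  obtain ⟨a2, hrest⟩ := List.pairwise_cons.1 hrest
  obtain ⟨a3, hrest⟩ := List.pairwise_cons.1 hrest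
  obtain ⟨a4, -⟩ := List.pairwise_cons.1 hrest
  have d12 : u₁ ≠ u₂ := a1 u₂ (by simp)
  have d13 : u₁ ≠ u₃ := a1 u₃ (by simp)
  have d14 : u₁ ≠ u₄ := a1 u₄ (by simp)
  have d15 : u₁ ≠ u₅ := a1 u₅ (by simp)
  have d23 : u₂ ≠ u₃ := a2 u₃ (by simp)
  have d24 : u₂ ≠ u₄ := a2 u₄ (by simp)
  have d25 : u₂ ≠ u₅ := a2 u₅ (by simp)
  have d34 : u₃ ≠ u₄ := a3 u₄ (by simp)
  have d35 : u₃ ≠ u₅ := a3 u₅ (by simp)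
  have d45 : u₄ ≠ u₅ := a4 u₅ (by simp)
  have hv1u1 : v₁ ≠ u₁ := hv₁.ne'
  have hN1 : G.neighborFinset u₁ = {u₂, u₅, v₁} :=
    nbhd_eq hcub h12 h51.symm hv₁ d25 hv₁2.symm hv₁5.symm
  obtain ⟨x₂, -, -, -, hN2⟩ := three_nbrs hcub h12.symm h23 d13
  -- hN2 : G.neighborFinset u₂ = {u₁, u₃, x₂}
  -- Claim A : v₁ ≠ u₃
  have hA : v₁ ≠ u₃ := by
    intro heq
    have hadj13 : G.Adj u₁ u₃ := heq ▸ hv₁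
    have hN3 : G.neighborFinset u₃ = {u₂, u₁, u₄} :=
      nbhd_eq hcub h23.symm hadj13.symm h34 d12.symm d24 d14
    rcases hside with h5 | ⟨hq, C, hCq, hu3C, hu4C, hu1C, hu2C, hu5C⟩
    · set A : Finset V := {u₁, u₂, u₃} with hAdef
      have hm1 : u₁ ∈ A := by simp [hAdef]
      have hm2 : u₂ ∈ A := by simp [hAdef]
      have hm3 : u₃ ∈ A := by simp [hAdef]
      refine cyc5_contra hcub h5 A (le_trans (card3_le _ _ _) (by omega)) ⟨u₁, hm1⟩ ?_ ?_
      · have hN1' : G.neighborFinset u₁ = {u₂, v₁, u₅} :=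
          nbhd_eq hcub h12 hv₁ h51.symm hv₁2.symm d25 hv₁5
        have b1 := outdeg_le_one hN1' hm2 (show v₁ ∈ A by rw [heq]; exact hm3)
        have b2 := outdeg_le_one hN2 hm1 hm3
        have b3 := outdeg_le_one hN3 hm2 hm1
        have key : ∀ f : V → ℕ, ∑ x ∈ A, f x = f u₁ + (f u₂ + f u₃) := by
          intro f
          rw [hAdef, Finset.sum_insert (by simp [d12, d13]),
            Finset.sum_insert (by simp [d23]), Finset.sum_singleton]
        rw [key]
        omega
      · exact tri_circuit (by simp [hAdef]) (by simp [hAdef]) (by simp [hAdef])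
          d12 d13 d23 h12 h23 hadj13.symm
    · obtain ⟨h1C, -⟩ := third_in_quadset hCq hu3C hN3 hu2C
      exact hu1C h1C
  -- Claim B : v₁ ≠ u₄
  have hB : v₁ ≠ u₄ := by
    intro heq
    have hadj14 : G.Adj u₁ u₄ := heq ▸ hv₁
    have hN4 : G.neighborFinset u₄ = {u₅, u₁, u₃} :=
      nbhd_eq hcub h45 hadj14.symm h34.symm d15.symm d35.symm d13
    rcases hside with h5 | ⟨hq, C, hCq, hu3C, hu4C, hu1C, hu2C, hu5C⟩
    · set A : Finset V := {u₁, u₄, u₅} with hAdef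
      have hm1 : u₁ ∈ A := by simp [hAdef]
      have hm4 : u₄ ∈ A := by simp [hAdef]
      have hm5 : u₅ ∈ A := by simp [hAdef]
      refine cyc5_contra hcub h5 A (le_trans (card3_le _ _ _) (by omega)) ⟨u₁, hm1⟩ ?_ ?_
      · have hN1' : G.neighborFinset u₁ = {u₅, v₁, u₂} :=
          nbhd_eq hcub h51.symm hv₁ h12 hv₁5.symm d25.symm hv₁2
        have b1 := outdeg_le_one hN1' hm5 (show v₁ ∈ A by rw [heq]; exact hm4)
        have b4 := outdeg_le_one hN4 hm5 hm1
        obtain ⟨x₅, -, -, -, hN5⟩ := three_nbrs hcub h45.symm h51 d14.symm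
        have b5 := outdeg_le_one hN5 hm4 hm1
        have key : ∀ f : V → ℕ, ∑ x ∈ A, f x = f u₁ + (f u₄ + f u₅) := by
          intro f
          rw [hAdef, Finset.sum_insert (by simp [d14, d15]),
            Finset.sum_insert (by simp [d45]), Finset.sum_singleton]
        rw [key]
        omega
      · exact tri_circuit (by simp [hAdef]) (by simp [hAdef]) (by simp [hAdef])
          d14 d15 d45 hadj14 h45 h51
    · obtain ⟨h1C, -⟩ := third_in_quadset hCq hu4C hN4 hu5C
      exact hu1C h1C
  -- Claim C : ¬ G.Adj u₃ v₁
  have hC : ¬ G.Adj u₃ v₁ := by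
    intro h3v
    have hN1' : G.neighborFinset u₁ = {u₂, v₁, u₅} :=
      nbhd_eq hcub h12 hv₁ h51.symm hv₁2.symm d25 hv₁5
    have hN3v : G.neighborFinset u₃ = {u₂, v₁, u₄} :=
      nbhd_eq hcub h23.symm h3v h34 hv₁2.symm.symm.symm d24 hB
    obtain ⟨t, -, -, -, hNt⟩ := three_nbrs hcub hv₁.symm h3v.symm d13
    -- hNt : G.neighborFinset v₁ = {u₁, u₃, t}
    rcases hside with h5 | ⟨hq, C, hCq, hu3C, hu4C, hu1C, hu2C, hu5C⟩
    · set A : Finset V := {u₁, u₂, u₃, v₁} with hAdef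
      have hm1 : u₁ ∈ A := by simp [hAdef]
      have hm2 : u₂ ∈ A := by simp [hAdef]
      have hm3 : u₃ ∈ A := by simp [hAdef]
      have hmv : v₁ ∈ A := by simp [hAdef]
      refine cyc5_contra hcub h5 A (card4_le _ _ _ _) ⟨u₁, hm1⟩ ?_ ?_
      · have b1 := outdeg_le_one hN1' hm2 hmv
        have b2 := outdeg_le_one hN2 hm1 hm3
        have b3 := outdeg_le_one hN3v hm2 hmv
        have bv := outdeg_le_one hNt hm1 hm3
        have key : ∀ f : V → ℕ, ∑ x ∈ A, f x = f u₁ + (f u₂ + (f u₃ + f v₁)) := by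
          intro f
          rw [hAdef, Finset.sum_insert (by simp [d12, d13, hv1u1.symm]),
            Finset.sum_insert (by simp [d23, hv₁2.symm]),
            Finset.sum_insert (by simp [hA.symm]), Finset.sum_singleton]
        rw [key]
        omega
      · exact quad_circuit (by simp [hAdef]) (by simp [hAdef]) (by simp [hAdef])
          (by simp [hAdef]) d12 d13 hv1u1.symm d23 hv₁2.symm hA.symm
          h12 h23 h3v hv₁.symm
    · -- quad-connected case
      obtain ⟨hv1C, -⟩ := third_in_quadset hCq hu3C hN3v hu2C
      obtain ⟨-, htC⟩ := third_in_quadset hCq hv1C hNt hu1C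
      obtain ⟨a, b, c, d, hCset, hab, hac, had, hbc, hbd, hcd, -⟩ := id hCq
      set CF : Finset V := {a, b, c, d} with hCFdef
      have hCF : ∀ w, w ∈ C ↔ w ∈ CF := by
        intro w; rw [hCset]; simp [hCFdef]
      have hCFcard : CF.card = 4 := by
        rw [hCFdef, Finset.card_insert_of_notMem (by simp [hab, hac, had]),
          Finset.card_insert_of_notMem (by simp [hbc, hbd]),
          Finset.card_insert_of_notMem (by simp [hcd]), Finset.card_singleton]
      set B : Finset V := insert u₁ (insert u₂ CF) with hBdef
      have hBC : ∀ w, w ∈ C → w ∈ B := by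
        intro w hw
        simp only [hBdef, Finset.mem_insert]
        exact Or.inr (Or.inr ((hCF w).1 hw))
      have hu1B : u₁ ∈ B := by simp [hBdef]
      have hu2B : u₂ ∈ B := by simp [hBdef]
      have hu1nCF : u₁ ∉ CF := fun h => hu1C ((hCF u₁).2 h)
      have hu2nCF : u₂ ∉ CF := fun h => hu2C ((hCF u₂).2 h)
      have hcardB : B.card = 6 := by
        rw [hBdef, Finset.card_insert_of_notMem (by simp [d12, hu1nCF]),
          Finset.card_insert_of_notMem hu2nCF, hCFcard]
      have h12card : 12 ≤ Fintype.card V := by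
        refine hq.2.2.1 ⟨C, {u₁, u₂, u₃, v₁}, hCq,
          ⟨u₁, u₂, u₃, v₁, rfl, d12, d13, hv₁.ne, d23, hv₁2.symm, hA.symm,
            h12, h23, h3v, hv₁.symm⟩, ?_⟩
        intro h
        have h4 := hu4C
        rw [h] at h4
        simp only [Set.mem_insert_iff, Set.mem_singleton_iff] at h4
        rcases h4 with rfl | rfl | rfl | rfl
        · exact d14 rfl
        · exact d24 rfl
        · exact d34 rfl
        · exact hB rfl
      refine quad_contra hcub hq h12card B (by omega) (by omega) ?_ ?_
      · -- sum bound
        have hDsub : ({u₃, v₁} : Finset V) ⊆ CF := by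
          intro w hw
          simp only [Finset.mem_insert, Finset.mem_singleton] at hw
          rcases hw with rfl | rfl
          · exact (hCF w).1 hu3C
          · exact (hCF w).1 hv1C
        have hsplit : (∑ x ∈ CF \ ({u₃, v₁} : Finset V), (G.neighborFinset x \ B).card)
            + ∑ x ∈ ({u₃, v₁} : Finset V), (G.neighborFinset x \ B).card
            = ∑ x ∈ CF, (G.neighborFinset x \ B).card := Finset.sum_sdiff hDsub
        have hz3 : (G.neighborFinset u₃ \ B).card = 0 :=
          outdeg_zero hN3v hu2B (hBC v₁ hv1C) (hBC u₄ hu4C)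
        have hzv : (G.neighborFinset v₁ \ B).card = 0 :=
          outdeg_zero hNt hu1B (hBC u₃ hu3C) (hBC t htC)
        have hDsum : ∑ x ∈ ({u₃, v₁} : Finset V), (G.neighborFinset x \ B).card = 0 := by
          rw [Finset.sum_insert (by simp [hA.symm]), Finset.sum_singleton, hz3, hzv]
        have hrest : ∑ x ∈ CF \ ({u₃, v₁} : Finset V), (G.neighborFinset x \ B).card
            ≤ (CF \ ({u₃, v₁} : Finset V)).card := by
          have := Finset.sum_le_card_nsmul (CF \ ({u₃, v₁} : Finset V))
            (fun x => (G.neighborFinset x \ B).card) 1 ?_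
          · simpa using this
          · intro x hx
            have hxCF : x ∈ CF := (Finset.mem_sdiff.1 hx).1
            exact quadset_outdeg hcub hCq hBC ((hCF x).2 hxCF)
        have hsd : (CF \ ({u₃, v₁} : Finset V)).card = 2 := by
          rw [Finset.card_sdiff_of_subset hDsub, hCFcard,
            Finset.card_insert_of_notMem (by simp [hA.symm]), Finset.card_singleton]
        have b1 : (G.neighborFinset u₁ \ B).card ≤ 1 :=
          outdeg_le_one hN1' hu2B (hBC v₁ hv1C)
        have b2 : (G.neighborFinset u₂ \ B).card ≤ 1 :=
          outdeg_le_one hN2 hu1B (hBC u₃ hu3C)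
        have key : ∀ f : V → ℕ, ∑ x ∈ B, f x = f u₁ + (f u₂ + ∑ x ∈ CF, f x) := by
          intro f
          rw [hBdef, Finset.sum_insert (by simp [d12, hu1nCF]),
            Finset.sum_insert hu2nCF]
        rw [key]
        omega
      · exact quad_circuit (a := u₁) (b := u₂) (c := u₃) (d := v₁)
          (by simpa using hu1B) (by simpa using hu2B)
          (by simpa using hBC u₃ hu3C) (by simpa using hBC v₁ hv1C)
          d12 d13 hv1u1.symm d23 hv₁2.symm hA.symm h12 h23 h3v hv₁.symm
  -- Claim D : ¬ G.Adj u₄ v₁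
  have hD : ¬ G.Adj u₄ v₁ := by
    intro h4v
    have hN1' : G.neighborFinset u₁ = {v₁, u₅, u₂} :=
      nbhd_eq hcub hv₁ h51.symm h12 hv₁5 hv₁2 d25.symm
    have hN4v : G.neighborFinset u₄ = {u₃, u₅, v₁} :=
      nbhd_eq hcub h34.symm h45 h4v d35 hA.symm hv₁5.symm
    obtain ⟨t, -, -, -, hNt⟩ := three_nbrs hcub hv₁.symm h4v.symm d14
    -- hNt : G.neighborFinset v₁ = {u₁, u₄, t}
    obtain ⟨x₅, -, -, -, hN5⟩ := three_nbrs hcub h45.symm h51 d14.symm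
    -- hN5 : neighborFinset u₅ = {u₄, u₁, x₅}
    rcases hside with h5 | ⟨hq, C, hCq, hu3C, hu4C, hu1C, hu2C, hu5C⟩
    · set A : Finset V := {u₁, v₁, u₄, u₅} with hAdef
      have hm1 : u₁ ∈ A := by simp [hAdef]
      have hmv : v₁ ∈ A := by simp [hAdef]
      have hm4 : u₄ ∈ A := by simp [hAdef]
      have hm5 : u₅ ∈ A := by simp [hAdef]
      refine cyc5_contra hcub h5 A (card4_le _ _ _ _) ⟨u₁, hm1⟩ ?_ ?_
      · have b1 := outdeg_le_one hN1' hmv hm5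
        have bv := outdeg_le_one hNt hm1 hm4
        have hN4A : G.neighborFinset u₄ = {u₅, v₁, u₃} :=
          nbhd_eq hcub h45 h4v h34.symm hv₁5.symm d35.symm hA
        have b4 := outdeg_le_one hN4A hm5 hmv
        have b5 := outdeg_le_one hN5 hm4 hm1
        have key : ∀ f : V → ℕ, ∑ x ∈ A, f x = f u₁ + (f v₁ + (f u₄ + f u₅)) := by
          intro f
          rw [hAdef, Finset.sum_insert (by simp [hv1u1.symm, d14, d15]),
            Finset.sum_insert (by simp [hB, hv₁5]),
            Finset.sum_insert (by simp [d45]), Finset.sum_singleton]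
        rw [key]
        omega
      · exact quad_circuit (by simp [hAdef]) (by simp [hAdef]) (by simp [hAdef])
          (by simp [hAdef]) hv₁.ne d14 d15 hB hv₁5 d45
          hv₁ h4v.symm h45 h51
    · have hN4v' : G.neighborFinset u₄ = {u₅, u₃, v₁} :=
        nbhd_eq hcub h45 h34.symm h4v d35.symm hv₁5.symm hA.symm
      obtain ⟨-, hv1C⟩ := third_in_quadset hCq hu4C hN4v' hu5C
      obtain ⟨-, htC⟩ := third_in_quadset hCq hv1C hNt hu1C
      obtain ⟨x₃, -, -, -, hN3⟩ := three_nbrs hcub h23.symm h34 d24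
      -- hN3 : neighborFinset u₃ = {u₂, u₄, x₃}
      obtain ⟨-, hx3C⟩ := third_in_quadset hCq hu3C hN3 hu2C
      obtain ⟨a, b, c, d, hCset, hab, hac, had, hbc, hbd, hcd, -⟩ := id hCq
      set CF : Finset V := {a, b, c, d} with hCFdef
      have hCF : ∀ w, w ∈ C ↔ w ∈ CF := by
        intro w; rw [hCset]; simp [hCFdef]
      have hCFcard : CF.card = 4 := by
        rw [hCFdef, Finset.card_insert_of_notMem (by simp [hab, hac, had]),
          Finset.card_insert_of_notMem (by simp [hbc, hbd]),
          Finset.card_insert_of_notMem (by simp [hcd]), Finset.card_singleton]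
      set B' : Finset V := insert u₁ (insert u₅ CF) with hBdef
      have hBC : ∀ w, w ∈ C → w ∈ B' := by
        intro w hw
        simp only [hBdef, Finset.mem_insert]
        exact Or.inr (Or.inr ((hCF w).1 hw))
      have hu1B : u₁ ∈ B' := by simp [hBdef]
      have hu5B : u₅ ∈ B' := by simp [hBdef]
      have hu1nCF : u₁ ∉ CF := fun h => hu1C ((hCF u₁).2 h)
      have hu5nCF : u₅ ∉ CF := fun h => hu5C ((hCF u₅).2 h)
      have hcardB : B'.card = 6 := by
        rw [hBdef, Finset.card_insert_of_notMem (by simp [d15, hu1nCF]),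
          Finset.card_insert_of_notMem hu5nCF, hCFcard]
      have h12card : 12 ≤ Fintype.card V := by
        refine hq.2.2.1 ⟨C, {u₁, v₁, u₄, u₅}, hCq,
          ⟨u₁, v₁, u₄, u₅, rfl, hv₁.ne, d14, d15, hB, hv₁5, d45,
            hv₁, h4v.symm, h45, h51⟩, ?_⟩
        intro h
        have h3 := hu3C
        rw [h] at h3
        simp only [Set.mem_insert_iff, Set.mem_singleton_iff] at h3
        rcases h3 with rfl | rfl | rfl | rfl
        · exact d13 rfl
        · exact hA rfl
        · exact d34 rfl
        · exact d35 rfl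
      refine quad_contra hcub hq h12card B' (by omega) (by omega) ?_ ?_
      · have hDsub : ({u₄, v₁} : Finset V) ⊆ CF := by
          intro w hw
          simp only [Finset.mem_insert, Finset.mem_singleton] at hw
          rcases hw with rfl | rfl
          · exact (hCF w).1 hu4C
          · exact (hCF w).1 hv1C
        have hsplit : (∑ x ∈ CF \ ({u₄, v₁} : Finset V), (G.neighborFinset x \ B').card)
            + ∑ x ∈ ({u₄, v₁} : Finset V), (G.neighborFinset x \ B').card
            = ∑ x ∈ CF, (G.neighborFinset x \ B').card := Finset.sum_sdiff hDsub
        have hz4 : (G.neighborFinset u₄ \ B').card = 0 :=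
          outdeg_zero hN4v (hBC u₃ hu3C) hu5B (hBC v₁ hv1C)
        have hzv : (G.neighborFinset v₁ \ B').card = 0 :=
          outdeg_zero hNt hu1B (hBC u₄ hu4C) (hBC t htC)
        have hDsum : ∑ x ∈ ({u₄, v₁} : Finset V), (G.neighborFinset x \ B').card = 0 := by
          rw [Finset.sum_insert (by simp [hB.symm]), Finset.sum_singleton, hz4, hzv]
        have hrest : ∑ x ∈ CF \ ({u₄, v₁} : Finset V), (G.neighborFinset x \ B').card
            ≤ (CF \ ({u₄, v₁} : Finset V)).card := by
          have := Finset.sum_le_card_nsmul (CF \ ({u₄, v₁} : Finset V))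
            (fun x => (G.neighborFinset x \ B').card) 1 ?_
          · simpa using this
          · intro x hx
            have hxCF : x ∈ CF := (Finset.mem_sdiff.1 hx).1
            exact quadset_outdeg hcub hCq hBC ((hCF x).2 hxCF)
        have hsd : (CF \ ({u₄, v₁} : Finset V)).card = 2 := by
          rw [Finset.card_sdiff_of_subset hDsub, hCFcard,
            Finset.card_insert_of_notMem (by simp [hB.symm]), Finset.card_singleton]
        have b1 : (G.neighborFinset u₁ \ B').card ≤ 1 :=
          outdeg_le_one hN1' (hBC v₁ hv1C) hu5B
        have b5 : (G.neighborFinset u₅ \ B').card ≤ 1 :=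
          outdeg_le_one hN5 (hBC u₄ hu4C) hu1B
        have key : ∀ f : V → ℕ, ∑ x ∈ B', f x = f u₁ + (f u₅ + ∑ x ∈ CF, f x) := by
          intro f
          rw [hBdef, Finset.sum_insert (by simp [d15, hu1nCF]),
            Finset.sum_insert hu5nCF]
        rw [key]
        omega
      · exact quad_circuit (a := u₁) (b := v₁) (c := u₄) (d := u₅)
          (by simpa using hu1B) (by simpa using hBC v₁ hv1C)
          (by simpa using hBC u₄ hu4C) (by simpa using hu5B)
          hv₁.ne d14 d15 hB hv₁5 d45 hv₁ h4v.symm h45 h51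
  -- assemble
  refine ⟨⟨h34, hv₁, d13.symm, hA.symm, d14.symm, hB.symm⟩, ?_, hC, ?_, hD⟩
  · intro h
    rcases adj_cases hN1 h.symm with rfl | rfl | rfl
    · exact d23 rfl
    · exact d35 rfl
    · exact hA rfl
  · intro h
    rcases adj_cases hN1 h.symm with rfl | rfl | rfl
    · exact d24 rfl
    · exact d45 rfl
    · exact hB rfl
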